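/- Every partial orientation of a connected multigraph is equivalent via cycle reversals and edge pivots to a unique cycle-path minimal partial orientation (with respect to any fixed pair (<, A)); consequently, cycle-path minimal partial orientations give unique representatives for each achievable indegree sequence. -/

import Mathlib

open Classical

noncomputable section

/-- A finite multigraph, given by a finite vertex type, a finite edge type, and
two endpoint maps (which also provide a built-in reference direction for each edge). -/
structure Multigraph where
  V : Type
  E : Type
  [fintypeV : Fintype V]
  [fintypeE : Fintype E]
  fst : E → V
  snd : E → V

attribute [instance] Multigraph.fintypeV Multigraph.fintypeE

namespace Multigraph

variable (G : Multigraph)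

/-- Adjacency between vertices using only edges in `S`. -/
def adjOn (S : Set G.E) (u v : G.V) : Prop :=
  ∃ e ∈ S, (G.fst e = u ∧ G.snd e = v) ∨ (G.fst e = v ∧ G.snd e = u)

/-- Reachability (in the undirected sense) using only edges in `S`. -/
def reachOn (S : Set G.E) : G.V → G.V → Prop :=
  Relation.ReflTransGen (G.adjOn S)

def Connected : Prop := ∀ u v : G.V, G.reachOn Set.univ u v

def IsLoop (e : G.E) : Prop := G.fst e = G.snd e

def IsBridge (e : G.E) : Prop := ¬ G.reachOn {f | f ≠ e} (G.fst e) (G.snd e)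

/-- Number of connected components of the spanning subgraph with edge set `S`. -/
def comps (S : Set G.E) : ℕ := Nat.card (Quot (G.reachOn S))

/-- Rank of an edge set: `|V|` minus the number of components it spans. -/
def rk (S : Set G.E) : ℕ := Fintype.card G.V - G.comps S

/-- The Tutte polynomial, via the corank-nullity (subgraph) expansion. -/
def tutte (x y : ℚ) : ℚ :=
  ∑ S : Finset G.E,
    (x - 1) ^ (G.rk Set.univ - G.rk (↑S : Set G.E)) * (y - 1) ^ (S.card - G.rk (↑S : Set G.E))

/-- The genus (cycle rank) `|E| - |V| + 1` of a connected multigraph. -/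
def genus : ℕ := Fintype.card G.E + 1 - Fintype.card G.V

/-- A partial orientation: each edge is unoriented (`none`), oriented in the reference
direction `fst → snd` (`some true`), or oriented oppositely (`some false`). -/
abbrev PartialOrientation := G.E → Option Bool

/-- The tail of edge `e` traversed in direction `b` (`true` = `fst → snd`). -/
def dtail (e : G.E) (b : Bool) : G.V := if b then G.fst e else G.snd e

/-- The head of edge `e` traversed in direction `b` (`true` = `fst → snd`). -/
def dhead (e : G.E) (b : Bool) : G.V := if b then G.snd e else G.fst e

/-- Directed adjacency under a partial orientation. -/
def dAdj (O : G.PartialOrientation) (u v : G.V) : Prop :=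
  ∃ e b, O e = some b ∧ G.dtail e b = u ∧ G.dhead e b = v

/-- Directed reachability under a partial orientation. -/
def dReach (O : G.PartialOrientation) : G.V → G.V → Prop :=
  Relation.ReflTransGen (G.dAdj O)

/-- A partial orientation is acyclic iff it contains no directed cycle, equivalently there
is no oriented edge together with a directed path from its head back to its tail. -/
def Acyclic (O : G.PartialOrientation) : Prop :=
  ¬ ∃ e b, O e = some b ∧ G.dReach O (G.dhead e b) (G.dtail e b)

/-- `e` crosses the cut determined by the vertex set `X`. -/
def crosses (X : Set G.V) (e : G.E) : Prop := ¬ ((G.fst e ∈ X) ↔ (G.snd e ∈ X))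

/-- `(X, Xᶜ)` is a directed cut of `O`: the cut is nonempty and every crossing edge is
oriented from `X` to `Xᶜ`. -/
def IsDirCut (O : G.PartialOrientation) (X : Set G.V) : Prop :=
  (∃ e, G.crosses X e) ∧
  ∀ e, G.crosses X e →
    (G.fst e ∈ X → O e = some true) ∧ (G.snd e ∈ X → O e = some false)

/-- A partial orientation is strongly connected iff it contains no directed cut. -/
def StronglyConnected (O : G.PartialOrientation) : Prop :=
  ¬ ∃ X, G.IsDirCut O X

/-- A directed cycle of `O`: a nonempty cyclically chained list of oriented steps using
pairwise distinct edges, each oriented in `O` as traversed. -/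
def IsDCycle (O : G.PartialOrientation) (c : List (G.E × Bool)) : Prop :=
  c ≠ [] ∧ (∀ s ∈ c, O s.1 = some s.2) ∧
  List.Chain' (fun s t => G.dhead s.1 s.2 = G.dtail t.1 t.2) (c ++ c.take 1) ∧
  (c.map Prod.fst).Nodup

/-- A half-open path: a directed path (all steps but the last oriented in `O`) followed by
an unoriented edge, imagined with the direction that would extend the path. -/
def IsHalfOpenPath (O : G.PartialOrientation) (p : List (G.E × Bool)) : Prop :=
  2 ≤ p.length ∧
  List.Chain' (fun s t => G.dhead s.1 s.2 = G.dtail t.1 t.2) p ∧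
  (p.map Prod.fst).Nodup ∧
  (∀ s ∈ p.dropLast, O s.1 = some s.2) ∧
  ∀ h : p ≠ [], O (p.getLast h).1 = none

/-- `O'` is obtained from `O` by reversing one directed cut. -/
def cutRev (O O' : G.PartialOrientation) : Prop :=
  ∃ X, G.IsDirCut O X ∧ (∀ e, ¬ G.crosses X e → O' e = O e) ∧
    (∀ e, G.crosses X e → O' e = (O e).map not)

/-- `O'` is obtained from `O` by reversing one directed cycle. -/
def cycleRev (O O' : G.PartialOrientation) : Prop :=
  ∃ c, G.IsDCycle O c ∧ (∀ e, e ∉ c.map Prod.fst → O' e = O e) ∧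
    (∀ s ∈ c, O' s.1 = some (!s.2))

/-- `O'` is obtained from `O` by a Jacob's ladder cascade along a half-open path:
the first edge becomes unoriented and all other edges get the reversed direction. -/
def cascade (O O' : G.PartialOrientation) : Prop :=
  ∃ p, G.IsHalfOpenPath O p ∧ (∀ e, e ∉ p.map Prod.fst → O' e = O e) ∧
    (∀ h : p ≠ [], O' (p.head h).1 = none) ∧
    (∀ s ∈ p.tail, O' s.1 = some (!s.2))

/-- An edge pivot at a vertex `v`: unorient an edge `e'` oriented into `v` and orient a
previously unoriented edge `e` toward `v`. -/
def pivot (O O' : G.PartialOrientation) : Prop :=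
  ∃ e e' b b', e ≠ e' ∧ O e = none ∧ O e' = some b' ∧
    G.dhead e b = G.dhead e' b' ∧
    O' e = some b ∧ O' e' = none ∧ ∀ f, f ≠ e → f ≠ e' → O' f = O f

/-- A directed cut of `O` is minimal w.r.t. `(<, A)` if its `<`-minimum crossing edge is
oriented as in the reference orientation `A`. -/
def MinimalCut [LinearOrder G.E] (A : G.E → Bool) (O : G.PartialOrientation)
    (X : Set G.V) : Prop :=
  ∃ e, G.crosses X e ∧ (∀ e', G.crosses X e' → e ≤ e') ∧ O e = some (A e)

/-- A partial orientation is cut minimal if every directed cut in it is minimal. -/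
def CutMinimal [LinearOrder G.E] (A : G.E → Bool) (O : G.PartialOrientation) : Prop :=
  ∀ X, G.IsDirCut O X → G.MinimalCut A O X

/-- A list of steps is minimal w.r.t. `(<, A)` if its `<`-minimum edge is traversed in the
direction given by the reference orientation `A`. -/
def MinimalSteps [LinearOrder G.E] (A : G.E → Bool) (c : List (G.E × Bool)) : Prop :=
  ∃ s ∈ c, (∀ t ∈ c, s.1 ≤ t.1) ∧ s.2 = A s.1

/-- A partial orientation is cycle minimal if every directed cycle in it is minimal. -/
def CycleMinimal [LinearOrder G.E] (A : G.E → Bool) (O : G.PartialOrientation) : Prop :=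
  ∀ c, G.IsDCycle O c → G.MinimalSteps A c

/-- A partial orientation is cycle-path minimal if every directed cycle and every
half-open path in it is minimal. -/
def CyclePathMinimal [LinearOrder G.E] (A : G.E → Bool) (O : G.PartialOrientation) : Prop :=
  G.CycleMinimal A O ∧ ∀ p, G.IsHalfOpenPath O p → G.MinimalSteps A p

/-- The indegree of a vertex: the number of edges oriented toward it. -/
def indeg (O : G.PartialOrientation) (v : G.V) : ℕ :=
  Nat.card {e : G.E // ∃ b, O e = some b ∧ G.dhead e b = v}

/-- Orient the (previously unoriented) edge `e` in direction `b`. -/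
def orient (O : G.PartialOrientation) (e : G.E) (b : Bool) : G.PartialOrientation :=
  fun f => if f = e then some b else O f

/-- Deletion of the edge `e`. -/
def deleteEdge (e : G.E) : Multigraph where
  V := G.V
  E := {f : G.E // f ≠ e}
  fintypeE := Subtype.fintype _
  fst := fun f => G.fst f.1
  snd := fun f => G.snd f.1

/-- Contraction of the edge `e`: identify its two endpoints and remove `e`. -/
def contractEdge (e : G.E) : Multigraph where
  V := Quot (fun a b => a = G.fst e ∧ b = G.snd e)
  E := {f : G.E // f ≠ e}
  fintypeV := Fintype.ofSurjective (Quot.mk _) (Quot.mk_surjective)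
  fintypeE := Subtype.fintype _
  fst := fun f => Quot.mk _ (G.fst f.1)
  snd := fun f => Quot.mk _ (G.snd f.1)

/-- The number of acyclic partial orientations of `G`. -/
def numAcyclic : ℕ := Nat.card {O : G.PartialOrientation // G.Acyclic O}

/-- The number of strongly connected partial orientations of `G`. -/
def numStrong : ℕ := Nat.card {O : G.PartialOrientation // G.StronglyConnected O}

end Multigraph

namespace Multigraph

section Aux

variable {G : Multigraph}

lemma dtail_not (e : G.E) (b : Bool) : G.dtail e (!b) = G.dhead e b := by cases b <;> rfl
lemma dhead_not (e : G.E) (b : Bool) : G.dhead e (!b) = G.dtail e b := by cases b <;> rfl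

/-- The head of an edge under a partial orientation, as an `Option`. -/
def headOf (O : G.PartialOrientation) (e : G.E) : Option G.V := (O e).map (G.dhead e)

lemma indeg_eq (O : G.PartialOrientation) (v : G.V) :
    G.indeg O v = (Finset.univ.filter fun e => headOf O e = some v).card := by
  rw [indeg, Nat.card_eq_fintype_card, Fintype.card_subtype]
  congr 1
  ext e
  simp only [Finset.mem_filter, Finset.mem_univ, true_and]
  constructor
  · rintro ⟨b, hb, hd⟩; simp [headOf, hb, hd]
  · intro h
    rcases he : O e with _ | b
    · simp [headOf, he] at h
    · refine ⟨b, rfl, ?_⟩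
      simpa [headOf, he] using h

/-- If `headOf O' = headOf O ∘ σ` for a permutation `σ`, indegrees agree. -/
lemma indeg_eq_of_perm (O O' : G.PartialOrientation) (σ : Equiv.Perm G.E)
    (h : ∀ e, headOf O' e = headOf O (σ e)) (v : G.V) : G.indeg O' v = G.indeg O v := by
  rw [indeg_eq, indeg_eq]
  refine Finset.card_bij (fun e _ => σ e) ?_ ?_ ?_
  · intro e he
    simp only [Finset.mem_filter, Finset.mem_univ, true_and] at he ⊢
    rw [← h]; exact he
  · intro a _ b _ hab; exact σ.injective hab
  · intro b hb
    refine ⟨σ.symm b, ?_, by simp⟩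
    simp only [Finset.mem_filter, Finset.mem_univ, true_and] at hb ⊢
    rw [h, Equiv.apply_symm_apply]; exact hb

lemma indeg_pivot {O O' : G.PartialOrientation} (h : G.pivot O O') (v : G.V) :
    G.indeg O' v = G.indeg O v := by
  obtain ⟨e, e', b, b', hne, hOe, hOe', hhead, hO'e, hO'e', hrest⟩ := h
  refine indeg_eq_of_perm O O' (Equiv.swap e e') (fun f => ?_) v
  rcases eq_or_ne f e with rfl | hfe
  · rw [Equiv.swap_apply_left]
    simp [headOf, hO'e, hOe', hhead]
  rcases eq_or_ne f e' with rfl | hfe'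
  · rw [Equiv.swap_apply_right]
    simp [headOf, hO'e', hOe]
  · rw [Equiv.swap_apply_of_ne_of_ne hfe hfe']
    simp [headOf, hrest f hfe hfe']

end Aux

end Multigraph
namespace Multigraph

section Aux2

variable {G : Multigraph}

lemma card_filter_toFinset_nodup {α : Type*} [DecidableEq α] {l : List α} (hl : l.Nodup)
    (p : α → Bool) : (l.toFinset.filter (fun a => p a = true)).card = l.countP p := by
  rw [← List.toFinset_filter, List.card_toFinset, List.Nodup.dedup (hl.filter p),
    List.countP_eq_length_filter]

lemma card_filter_split {α : Type*} [Fintype α] [DecidableEq α] (C : Finset α) (p : α → Prop)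
    [DecidablePred p] :
    (Finset.univ.filter p).card = (C.filter p).card + ((Finset.univ \ C).filter p).card := by
  rw [← Finset.card_union_of_disjoint, ← Finset.filter_union,
    Finset.union_sdiff_of_subset (Finset.subset_univ C)]
  exact Finset.disjoint_filter_filter (Finset.disjoint_sdiff)

/-- The tails of a directed cycle are the heads, rotated by one. -/
lemma dcycle_tails_eq {O : G.PartialOrientation} {c : List (G.E × Bool)} (hc : G.IsDCycle O c) :
    c.map (fun s => G.dtail s.1 s.2) =
      (G.dhead (c.getLast hc.1).1 (c.getLast hc.1).2) ::
        (c.map (fun s => G.dhead s.1 s.2)).dropLast := by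
  obtain ⟨hne, -, hch, -⟩ := hc
  rcases c with _ | ⟨a, t⟩
  · exact absurd rfl hne
  have hjunc : G.dhead ((a :: t).getLast hne).1 ((a :: t).getLast hne).2 = G.dtail a.1 a.2 := by
    have := (List.isChain_append.1 hch).2.2
    simpa [List.getLast?_eq_getLast hne] using this
  have hchain : List.Chain' (fun s u => G.dhead s.1 s.2 = G.dtail u.1 u.2) (a :: t) :=
    (List.isChain_append.1 hch).1
  have hlen : 0 < (a :: t).length := by simp
  apply List.ext_getElem
  · simp
  · intro n h1 h2
    match n with
    | 0 =>
      simpa [List.getElem_map] using hjunc.symm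
    | (Nat.succ m) =>
      simp only [List.getElem_map, List.getElem_cons_succ, List.getElem_dropLast,
        List.getElem_map]
      have hm : m < (a :: t).length - 1 := by
        simp only [List.length_map, List.length_cons] at h1
        simp only [List.length_cons]
        omega
      exact (List.isChain_iff_getElem.1 hchain m (by omega)).symm

lemma indeg_cycleRev {O O' : G.PartialOrientation} (h : G.cycleRev O O') (v : G.V) :
    G.indeg O' v = G.indeg O v := by
  classical
  obtain ⟨c, hc, hout, hflip⟩ := h
  rw [indeg_eq, indeg_eq]
  set C : Finset G.E := (c.map Prod.fst).toFinset with hC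
  rw [card_filter_split C (fun e => headOf O e = some v),
    card_filter_split C (fun e => headOf O' e = some v)]
  have hoffeq : ((Finset.univ \ C).filter (fun e => headOf O' e = some v)) =
      ((Finset.univ \ C).filter (fun e => headOf O e = some v)) := by
    apply Finset.filter_congr
    intro e he
    have : e ∉ c.map Prod.fst := by
      simp only [hC, Finset.mem_sdiff, List.mem_toFinset] at he
      exact he.2
    rw [headOf, headOf, hout e this]
  rw [hoffeq]
  congr 1
  -- the parts on the cycle
  have hnd : (c.map Prod.fst).Nodup := hc.2.2.2
  have key : ∀ (P : G.PartialOrientation) (f : (G.E × Bool) → G.V),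
      (∀ s ∈ c, headOf P s.1 = some (f s)) →
      (C.filter (fun e => headOf P e = some v)).card = c.countP (fun s => decide (f s = v)) := by
    intro P f hPf
    have h1 : (C.filter (fun e => headOf P e = some v)) =
        (C.filter (fun e => decide (headOf P e = some v) = true)) := by
      apply Finset.filter_congr; intro e _; simp
    rw [h1, card_filter_toFinset_nodup hnd, List.countP_map]
    apply List.countP_congr
    intro s hs
    simp only [Function.comp, decide_eq_true_eq, hPf s hs, Option.some.injEq]
  have hOc : ∀ s ∈ c, headOf O s.1 = some ((fun s => G.dhead s.1 s.2) s) := by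
    intro s hs; rw [headOf, hc.2.1 s hs]; rfl
  have hO'c : ∀ s ∈ c, headOf O' s.1 = some ((fun s => G.dtail s.1 s.2) s) := by
    intro s hs; rw [headOf, hflip s hs]; simp [dhead_not]
  rw [key O _ hOc, key O' _ hO'c]
  -- now countP over tails = countP over heads, via the rotation
  have heq : c.countP (fun s => decide (G.dtail s.1 s.2 = v)) =
      (c.map (fun s => G.dtail s.1 s.2)).countP (fun u => decide (u = v)) := by
    rw [List.countP_map]; rfl
  have heq2 : c.countP (fun s => decide (G.dhead s.1 s.2 = v)) =
      (c.map (fun s => G.dhead s.1 s.2)).countP (fun u => decide (u = v)) := by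
    rw [List.countP_map]; rfl
  rw [heq, heq2, dcycle_tails_eq ⟨hc.1, hc.2⟩]
  have hne := hc.1
  have hmapne : (c.map (fun s => G.dhead s.1 s.2)) ≠ [] := by
    simpa using hne
  conv_rhs => rw [← List.dropLast_append_getLast hmapne]
  rw [List.countP_cons, List.countP_append, List.getLast_map]
  simp only [List.countP_cons, List.countP_nil, decide_eq_true_eq]
  omega

end Aux2

end Multigraph
namespace Multigraph

section Phi

variable {G : Multigraph} [LinearOrder G.E]

/-- The number of edges above `e`. -/
def rkE (e : G.E) : ℕ := (Finset.univ.filter fun f => e < f).card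

/-- Weight of an edge: smaller edges get (much) larger weight. -/
def wt (e : G.E) : ℕ := 3 ^ rkE e

/-- Cost of the value of a partial orientation at an edge. -/
def cost (A : G.E → Bool) (e : G.E) (o : Option Bool) : ℕ :=
  if o = some (A e) then 0 else if o = none then 1 else 2

omit [LinearOrder G.E] in
lemma cost_le_two (A : G.E → Bool) (e : G.E) (o : Option Bool) : cost A e o ≤ 2 := by
  unfold cost
  split
  · omega
  · split <;> omega

/-- The potential function. -/
def Phi (A : G.E → Bool) (O : G.PartialOrientation) : ℕ := ∑ e, wt e * cost A e (O e)

lemma rkE_lt_rkE {e f : G.E} (h : e < f) : rkE f < rkE e := by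
  apply Finset.card_lt_card
  constructor
  · intro g hg
    simp only [Finset.mem_filter, Finset.mem_univ, true_and] at hg ⊢
    exact h.trans hg
  · intro hsub
    have := hsub (by simp [h] : f ∈ Finset.univ.filter fun g => e < g)
    simp at this

lemma wt_pos (e : G.E) : 0 < wt e := Nat.pow_pos (by norm_num)

lemma two_mul_geom (n : ℕ) : (∑ j ∈ Finset.range n, 2 * 3 ^ j) + 1 = 3 ^ n := by
  induction n with
  | zero => simp
  | succ m ih =>
    rw [Finset.sum_range_succ, pow_succ]
    omega

lemma sum_wt_lt {S : Finset G.E} {e : G.E} (h : ∀ f ∈ S, e < f) :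
    (∑ f ∈ S, 2 * wt f) < wt e := by
  have hinj : ∀ x ∈ S, ∀ y ∈ S, rkE x = rkE y → x = y := by
    intro x _ y _ hxy
    by_contra hne
    rcases lt_or_gt_of_ne hne with hlt | hlt
    · have := rkE_lt_rkE hlt; omega
    · have := rkE_lt_rkE hlt; omega
  have h1 : ∑ f ∈ S, 2 * wt f = ∑ j ∈ S.image rkE, 2 * 3 ^ j := by
    rw [Finset.sum_image hinj]
    rfl
  have h2 : S.image rkE ⊆ Finset.range (rkE e) := by
    intro j hj
    simp only [Finset.mem_image] at hj
    obtain ⟨f, hf, rfl⟩ := hj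
    exact Finset.mem_range.2 (rkE_lt_rkE (h f hf))
  calc ∑ f ∈ S, 2 * wt f = ∑ j ∈ S.image rkE, 2 * 3 ^ j := h1
    _ ≤ ∑ j ∈ Finset.range (rkE e), 2 * 3 ^ j := Finset.sum_le_sum_of_subset h2
    _ < 3 ^ rkE e := by have := two_mul_geom (rkE e); omega
    _ = wt e := rfl

/-- Main potential-drop lemma. -/
lemma phi_lt (A : G.E → Bool) (O O' : G.PartialOrientation) (l : List (G.E × Bool))
    (hnd : (l.map Prod.fst).Nodup)
    (houts : ∀ f, f ∉ l.map Prod.fst → O' f = O f)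
    (s0 : G.E × Bool) (hs0 : s0 ∈ l) (hmin : ∀ t ∈ l, s0.1 ≤ t.1)
    (hdrop : cost A s0.1 (O' s0.1) + 1 ≤ cost A s0.1 (O s0.1)) :
    Phi A O' < Phi A O := by
  classical
  set L := (l.map Prod.fst).toFinset with hL
  have hsplit : ∀ P : G.PartialOrientation,
      Phi A P = (∑ f ∈ Finset.univ \ L, wt f * cost A f (P f)) + ∑ f ∈ L, wt f * cost A f (P f) := by
    intro P
    rw [Phi, Finset.sum_sdiff (Finset.subset_univ L)]
  rw [hsplit O, hsplit O']
  have hoff : (∑ f ∈ Finset.univ \ L, wt f * cost A f (O' f)) =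
      ∑ f ∈ Finset.univ \ L, wt f * cost A f (O f) := by
    apply Finset.sum_congr rfl
    intro f hf
    rw [houts f (by simpa [hL, Finset.mem_sdiff] using hf)]
  rw [hoff]
  apply Nat.add_lt_add_left
  have he0 : s0.1 ∈ L := by
    simp only [hL, List.mem_toFinset, List.mem_map]
    exact ⟨s0, hs0, rfl⟩
  rw [← Finset.add_sum_erase _ _ he0, ← Finset.add_sum_erase _ _ he0]
  have hbound : (∑ f ∈ L.erase s0.1, wt f * cost A f (O' f)) < wt s0.1 := by
    calc (∑ f ∈ L.erase s0.1, wt f * cost A f (O' f)) ≤ ∑ f ∈ L.erase s0.1, 2 * wt f := by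
          apply Finset.sum_le_sum
          intro f hf
          rw [Nat.mul_comm]
          exact Nat.mul_le_mul_right _ (cost_le_two A f (O' f))
      _ < wt s0.1 := by
          apply sum_wt_lt
          intro f hf
          have hfL : f ∈ L := Finset.mem_of_mem_erase hf
          have hfne : f ≠ s0.1 := Finset.ne_of_mem_erase hf
          simp only [hL, List.mem_toFinset, List.mem_map] at hfL
          obtain ⟨t, ht, rfl⟩ := hfL
          exact lt_of_le_of_ne (hmin t ht) (Ne.symm hfne)
  have hmain : wt s0.1 * cost A s0.1 (O' s0.1) + wt s0.1 ≤ wt s0.1 * cost A s0.1 (O s0.1) := by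
    calc wt s0.1 * cost A s0.1 (O' s0.1) + wt s0.1 = wt s0.1 * (cost A s0.1 (O' s0.1) + 1) := by ring
      _ ≤ wt s0.1 * cost A s0.1 (O s0.1) := Nat.mul_le_mul_left _ hdrop
  have : (∑ f ∈ L.erase s0.1, wt f * cost A f (O f)) ≥ 0 := Nat.zero_le _
  omega

end Phi

end Multigraph
namespace Multigraph

section Rev

variable {G : Multigraph}

lemma find?_mem_nodup {c : List (G.E × Bool)} (hnd : (c.map Prod.fst).Nodup) {s : G.E × Bool}
    (hs : s ∈ c) : c.find? (fun t => decide (t.1 = s.1)) = some s := by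
  have hsome : (c.find? (fun t => decide (t.1 = s.1))).isSome :=
    List.find?_isSome.2 ⟨s, hs, by simp⟩
  obtain ⟨t, ht⟩ := Option.isSome_iff_exists.1 hsome
  have h1 := List.find?_some ht
  have h2 := List.mem_of_find?_eq_some ht
  simp only [decide_eq_true_eq] at h1
  rw [ht]
  congr 1
  exact List.inj_on_of_nodup_map hnd h2 hs h1

lemma find?_none_of_not_mem {c : List (G.E × Bool)} {f : G.E} (hf : f ∉ c.map Prod.fst) :
    c.find? (fun t => decide (t.1 = f)) = none := by
  apply List.find?_eq_none.2
  intro s hs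
  simp only [decide_eq_true_eq]
  rintro rfl
  exact hf (List.mem_map.2 ⟨s, hs, rfl⟩)

/-- The reversal of a directed cycle, as a function. -/
def revCyc (O : G.PartialOrientation) (c : List (G.E × Bool)) : G.PartialOrientation :=
  fun f => match c.find? (fun t => decide (t.1 = f)) with
  | some s => some (!s.2)
  | none => O f

lemma cycleRev_revCyc {O : G.PartialOrientation} {c : List (G.E × Bool)} (hc : G.IsDCycle O c) :
    G.cycleRev O (revCyc O c) := by
  refine ⟨c, hc, ?_, ?_⟩
  · intro e he
    unfold revCyc
    rw [find?_none_of_not_mem he]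
  · intro s hs
    unfold revCyc
    rw [find?_mem_nodup hc.2.2.2 hs]

lemma exists_min_step (l : List (G.E × Bool)) [LinearOrder G.E] (hne : l ≠ []) :
    ∃ s0 ∈ l, ∀ t ∈ l, s0.1 ≤ t.1 := by
  classical
  have hLne : ((l.map Prod.fst).toFinset : Finset G.E).Nonempty := by
    simp only [List.toFinset_nonempty_iff]
    simpa using hne
  set e0 := (l.map Prod.fst).toFinset.min' hLne with he0
  have he0mem : e0 ∈ (l.map Prod.fst).toFinset := (l.map Prod.fst).toFinset.min'_mem hLne
  simp only [List.mem_toFinset, List.mem_map] at he0mem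
  obtain ⟨s0, hs0, hfst⟩ := he0mem
  refine ⟨s0, hs0, fun t ht => ?_⟩
  rw [hfst]
  exact Finset.min'_le _ _ (by simp only [List.mem_toFinset, List.mem_map]; exact ⟨t, ht, rfl⟩)

variable [LinearOrder G.E]

lemma bad_min_step {A : G.E → Bool} {l : List (G.E × Bool)} (hne : l ≠ [])
    (hmin : ¬ G.MinimalSteps A l) :
    ∃ s0 ∈ l, (∀ t ∈ l, s0.1 ≤ t.1) ∧ s0.2 = !(A s0.1) := by
  obtain ⟨s0, hs0, hle⟩ := exists_min_step l hne
  refine ⟨s0, hs0, hle, ?_⟩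
  rw [MinimalSteps] at hmin
  push_neg at hmin
  have := hmin s0 hs0 hle
  cases hA : A s0.1 <;> cases hs2 : s0.2 <;> simp_all

lemma cycle_step (A : G.E → Bool) {O : G.PartialOrientation} {c : List (G.E × Bool)}
    (hc : G.IsDCycle O c) (hmin : ¬ G.MinimalSteps A c) :
    ∃ O', G.cycleRev O O' ∧ Phi A O' < Phi A O := by
  refine ⟨revCyc O c, cycleRev_revCyc hc, ?_⟩
  obtain ⟨s0, hs0, hle, hbad⟩ := bad_min_step hc.1 hmin
  apply phi_lt A O (revCyc O c) c hc.2.2.2 ?_ s0 hs0 hle ?_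
  · intro f hf
    unfold revCyc
    rw [find?_none_of_not_mem hf]
  · have h1 : O s0.1 = some s0.2 := hc.2.1 s0 hs0
    have h2 : revCyc O c s0.1 = some (!s0.2) := by
      unfold revCyc
      rw [find?_mem_nodup hc.2.2.2 hs0]
    rw [h1, h2, hbad]
    simp [cost]

end Rev

end Multigraph
namespace Multigraph

section Cascade

variable {G : Multigraph}

/-- A half-open path can be cascaded via a sequence of pivots. -/
lemma cascade_pivots : ∀ (n : ℕ) (O : G.PartialOrientation) (p : List (G.E × Bool)),
    p.length = n → G.IsHalfOpenPath O p →
    ∃ O', Relation.ReflTransGen G.pivot O O' ∧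
      (∀ f, f ∉ p.map Prod.fst → O' f = O f) ∧
      (∀ h : p ≠ [], O' ((p.head h).1) = none) ∧
      (∀ s ∈ p.tail, O' s.1 = some (!s.2)) := by
  intro n
  induction n using Nat.strong_induction_on with
  | _ n IH =>
  intro O p hlen hp
  obtain ⟨hlen2, hchain, hnd, hdrop, hlast⟩ := hp
  have hpne : p ≠ [] := by intro h; rw [h] at hlen2; simp at hlen2
  set z := p.getLast hpne with hz
  set q := p.dropLast with hq
  have hqz : p = q ++ [z] := (List.dropLast_append_getLast hpne).symm
  have hqne : q ≠ [] := by
    intro h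
    rw [hqz, h] at hlen2
    simp at hlen2
  set y := q.getLast hqne with hy
  have hyq : y ∈ q := List.getLast_mem hqne
  have hOz : O z.1 = none := hlast hpne
  have hOy : O y.1 = some y.2 := hdrop y hyq
  have hndq : (q.map Prod.fst).Nodup ∧ (q.map Prod.fst).Disjoint ([z].map Prod.fst) := by
    have := hnd
    rw [hqz, List.map_append, List.nodup_append] at this
    exact ⟨this.1, fun a ha hb => this.2.2 a ha a hb rfl⟩
  have hzq : z.1 ∉ q.map Prod.fst := by
    intro hmem
    exact (hndq.2 hmem) (by simp)
  have hzy : z.1 ≠ y.1 := by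
    intro h
    exact hzq (h ▸ List.mem_map.2 ⟨y, hyq, rfl⟩)
  have hlink : G.dhead y.1 y.2 = G.dtail z.1 z.2 := by
    have hch := hchain
    rw [hqz] at hch
    have := (List.isChain_append.1 hch).2.2
    simpa [List.getLast?_eq_getLast hqne, ← hy] using this
  -- the single pivot at the far end
  set O₁ : G.PartialOrientation :=
    (fun f => if f = z.1 then some (!z.2) else if f = y.1 then none else O f) with hO₁
  have hpiv : G.pivot O O₁ := by
    refine ⟨z.1, y.1, !z.2, y.2, hzy, hOz, hOy, ?_, ?_, ?_, ?_⟩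
    · rw [dhead_not, ← hlink]
    · simp [hO₁]
    · simp [hO₁, hzy.symm, Ne.symm hzy]
    · intro f hf1 hf2
      simp [hO₁, hf1, hf2]
  rcases Nat.lt_or_ge 2 n with hn3 | hn2'
  case inr =>
    -- base case : p = [y, z]
    have hq1 : q.length = 1 := by
      have : p.length = q.length + 1 := by rw [hqz]; simp
      omega
    have hqy : q = [y] := by
      rcases q with _ | ⟨a, t⟩
      · exact absurd rfl hqne
      · rcases t with _ | ⟨b, t'⟩
        · rfl
        · simp at hq1
    refine ⟨O₁, Relation.ReflTransGen.single hpiv, ?_, ?_, ?_⟩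
    · intro f hf
      rw [hqz, hqy] at hf
      simp only [List.map_append, List.mem_append, List.map_cons, List.mem_cons] at hf
      push_neg at hf
      simp only [hO₁]
      rw [if_neg, if_neg]
      · simpa using hf.1.1
      · simpa using hf.2.1
    · intro h
      have h1 : p.head? = some (p.head h) := List.head?_eq_head h
      have h2 : p.head? = some y := by rw [hqz, hqy]; rfl
      rw [h1] at h2
      rw [Option.some.inj h2]
      simp [hO₁, hzy.symm, Ne.symm hzy]
    · intro s hs
      have : p.tail = [z] := by rw [hqz, hqy]; rfl
      rw [this] at hs
      simp only [List.mem_singleton] at hs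
      subst hs
      simp [hO₁]
  case inl =>
    -- inductive case: q is a half-open path for O₁
    have hq2 : 2 ≤ q.length := by
      have : p.length = q.length + 1 := by rw [hqz]; simp
      omega
    have hyql : y.1 ∉ (q.dropLast.map Prod.fst) := by
      have h2 : q = q.dropLast ++ [y] := (List.dropLast_append_getLast hqne).symm
      have := hndq.1
      rw [h2, List.map_append, List.nodup_append] at this
      intro hmem
      exact (this.2.2 _ hmem _ (by simp)) rfl
    have hqpath : G.IsHalfOpenPath O₁ q := by
      refine ⟨hq2, ?_, hndq.1, ?_, ?_⟩
      · apply List.IsChain.prefix hchain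
        rw [hqz]
        exact ⟨[z], rfl⟩
      · intro s hs
        have hsq : s ∈ q := (List.dropLast_sublist q).mem hs
        have hsz : s.1 ≠ z.1 := by
          intro h
          exact hzq (h ▸ List.mem_map.2 ⟨s, hsq, rfl⟩)
        have hsy : s.1 ≠ y.1 := by
          intro h
          exact hyql (h ▸ List.mem_map.2 ⟨s, hs, rfl⟩)
        simp only [hO₁]
        rw [if_neg hsz, if_neg hsy]
        exact hdrop s hsq
      · intro h
        simp only [hO₁, ← hy]
        rw [if_neg (Ne.symm hzy)]
        simp
    obtain ⟨O'', hRTG, hout'', hhead'', htail''⟩ :=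
      IH (n - 1) (by omega) O₁ q (by have : p.length = q.length + 1 := by rw [hqz]; simp
                                     omega) hqpath
    refine ⟨O'', Relation.ReflTransGen.head hpiv hRTG, ?_, ?_, ?_⟩
    · intro f hf
      have hfq : f ∉ q.map Prod.fst := by
        intro h
        apply hf
        rw [hqz, List.map_append]
        exact List.mem_append.2 (Or.inl h)
      have hfz : f ≠ z.1 := by
        intro h
        apply hf
        rw [hqz, List.map_append]
        exact List.mem_append.2 (Or.inr (by simp [h]))
      have hfy : f ≠ y.1 := by
        intro h
        exact hfq (h ▸ List.mem_map.2 ⟨y, hyq, rfl⟩)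
      rw [hout'' f hfq]
      simp [hO₁, hfz, hfy]
    · intro h
      have h1 : p.head? = some (p.head h) := List.head?_eq_head h
      have h2 : p.head? = some (q.head hqne) := by
        rw [hqz, List.head?_append_of_ne_nil q hqne]
        exact List.head?_eq_head hqne
      rw [h1] at h2
      rw [Option.some.inj h2]
      exact hhead'' hqne
    · intro s hs
      rw [hqz, List.tail_append_of_ne_nil hqne] at hs
      rcases List.mem_append.1 hs with hs1 | hs2
      · exact htail'' s hs1
      · simp only [List.mem_singleton] at hs2
        rw [hs2]
        rw [hout'' z.1 hzq]
        simp [hO₁]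

end Cascade

end Multigraph
namespace Multigraph

section Exists

variable {G : Multigraph} [LinearOrder G.E]

lemma path_step (A : G.E → Bool) {O : G.PartialOrientation} {p : List (G.E × Bool)}
    (hp : G.IsHalfOpenPath O p) (hmin : ¬ G.MinimalSteps A p) :
    ∃ O', Relation.ReflTransGen G.pivot O O' ∧ Phi A O' < Phi A O := by
  obtain ⟨O', hRTG, hout, hhead, htail⟩ := cascade_pivots p.length O p rfl hp
  have hpne : p ≠ [] := by
    intro h
    have := hp.1
    rw [h] at this
    simp at this
  obtain ⟨s0, hs0, hle, hbad⟩ := bad_min_step hpne hmin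
  refine ⟨O', hRTG, ?_⟩
  apply phi_lt A O O' p hp.2.2.1 hout s0 hs0 hle ?_
  rcases hpp : p with _ | ⟨a, t⟩
  · exact absurd hpp hpne
  have htne : t ≠ [] := by
    intro h
    have := hp.1
    rw [hpp, h] at this
    simp at this
  rw [hpp] at hs0
  rcases List.mem_cons.1 hs0 with rfl | hs0t
  · -- s0 is the head of the path
    have h1 : O' s0.1 = none := by
      have := hhead hpne
      have hh : some (p.head hpne) = some s0 := by
        rw [← List.head?_eq_head hpne, hpp]
        rfl
      rw [Option.some.inj hh] at this
      exact this
    have h2 : O s0.1 = some s0.2 := by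
      apply hp.2.2.2.1
      rw [hpp]
      rcases t with _ | ⟨b, u⟩
      · exact absurd rfl htne
      · simp [List.dropLast_cons₂]
    rw [h1, h2, hbad]
    simp [cost]
  · -- s0 is in the tail
    have h1 : O' s0.1 = some (!s0.2) := by
      apply htail
      rw [hpp]
      exact hs0t
    have h2 : cost A s0.1 (O s0.1) ≥ 1 := by
      have hs0p : s0 ∈ p := by rw [hpp]; exact List.mem_cons_of_mem a hs0t
      have hdec : s0 ∈ p.dropLast ++ [p.getLast hpne] := by
        rw [List.dropLast_append_getLast hpne]
        exact hs0p
      rcases List.mem_append.1 hdec with hmem | hmem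
      · have := hp.2.2.2.1 s0 hmem
        rw [this, hbad]
        simp [cost]
      · simp only [List.mem_singleton] at hmem
        have := hp.2.2.2.2 hpne
        rw [← hmem] at this
        rw [this]
        simp [cost]
    have h3 : cost A s0.1 (O' s0.1) = 0 := by
      rw [h1, hbad]
      simp [cost]
    omega

lemma indeg_rtg {O O' : G.PartialOrientation}
    (h : Relation.ReflTransGen (fun a b => G.cycleRev a b ∨ G.pivot a b) O O') (v : G.V) :
    G.indeg O' v = G.indeg O v := by
  induction h with
  | refl => rfl
  | tail _ hstep ih =>
    rcases hstep with hstep | hstep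
    · rw [indeg_cycleRev hstep, ih]
    · rw [indeg_pivot hstep, ih]

lemma exists_cpm (A : G.E → Bool) (O : G.PartialOrientation) :
    ∃ O', Relation.ReflTransGen (fun a b => G.cycleRev a b ∨ G.pivot a b) O O' ∧
      G.CyclePathMinimal A O' := by
  generalize hn : Phi A O = n
  induction n using Nat.strong_induction_on generalizing O with
  | _ n IH =>
  by_cases hO : G.CyclePathMinimal A O
  · exact ⟨O, Relation.ReflTransGen.refl, hO⟩
  rw [CyclePathMinimal, not_and_or] at hO
  rcases hO with hO | hO
  · rw [CycleMinimal] at hO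
    push_neg at hO
    obtain ⟨c, hc, hcm⟩ := hO
    obtain ⟨O₁, hrev, hlt⟩ := cycle_step A hc hcm
    obtain ⟨O', hRTG, hcpm⟩ := IH (Phi A O₁) (hn ▸ hlt) O₁ rfl
    exact ⟨O', Relation.ReflTransGen.head (Or.inl hrev) hRTG, hcpm⟩
  · push_neg at hO
    obtain ⟨p, hp, hpm⟩ := hO
    obtain ⟨O₁, hRTGp, hlt⟩ := path_step A hp hpm
    obtain ⟨O', hRTG, hcpm⟩ := IH (Phi A O₁) (hn ▸ hlt) O₁ rfl
    exact ⟨O', Relation.ReflTransGen.trans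
      (Relation.ReflTransGen.mono (fun a b hab => Or.inr hab) O O₁ hRTGp) hRTG, hcpm⟩

end Exists

end Multigraph
namespace Multigraph

section Beta

variable {G : Multigraph} [LinearOrder G.E]

/-- From reachability via large oriented edges we can extract an edge-nodup chain of steps. -/
lemma exists_good_steps (P : G.PartialOrientation) (e₀ : G.E) {u v : G.V}
    (h : Relation.ReflTransGen
      (fun x y => ∃ f c, e₀ < f ∧ P f = some c ∧ G.dtail f c = x ∧ G.dhead f c = y) u v) :
    ∃ st : List (G.E × Bool), (∀ s ∈ st, e₀ < s.1 ∧ P s.1 = some s.2) ∧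
      st.Chain' (fun s t => G.dhead s.1 s.2 = G.dtail t.1 t.2) ∧
      (st.map Prod.fst).Nodup ∧
      ((st = [] ∧ u = v) ∨ ∃ hne : st ≠ [],
        G.dtail (st.head hne).1 (st.head hne).2 = u ∧
        G.dhead (st.getLast hne).1 (st.getLast hne).2 = v) := by
  obtain ⟨l, hchain, hlast⟩ := List.exists_isChain_cons_of_relationReflTransGen h
  clear h
  induction l generalizing u with
  | nil =>
    exact ⟨[], by simp, by simp [List.Chain'], by simp, Or.inl ⟨rfl, by simpa using hlast⟩⟩
  | cons w l IH =>
    obtain ⟨hr, hchain'⟩ := List.isChain_cons_cons.1 hchain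
    have hlast' : (w :: l).getLast (by simp) = v := by
      rw [← hlast]
      exact (List.getLast_cons (by simp)).symm
    obtain ⟨st, hstep, hch, hnd, hends⟩ := IH hchain' hlast'
    obtain ⟨f, c, hf, hPf, htl, hhd⟩ := hr
    by_cases hfmem : f ∈ st.map Prod.fst
    · -- the edge already occurs: restart the chain from there
      have hfcmem : (f, c) ∈ st := by
        obtain ⟨s, hs, hs1⟩ := List.mem_map.1 hfmem
        have : s.2 = c := by
          have h1 := (hstep s hs).2
          rw [hs1, hPf] at h1
          exact (Option.some.inj h1).symm
        have : s = (f, c) := Prod.ext hs1 this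
        rwa [← this]
      obtain ⟨st₁, st₂, hdecomp⟩ := List.append_of_mem hfcmem
      have hsuffix : ((f, c) :: st₂) <:+ st := ⟨st₁, hdecomp.symm⟩
      refine ⟨(f, c) :: st₂, ?_, List.IsChain.suffix hch hsuffix, ?_, ?_⟩
      · intro s hs
        exact hstep s (hsuffix.subset hs)
      · exact hnd.sublist (hsuffix.sublist.map Prod.fst)
      · refine Or.inr ⟨by simp, by simpa using htl, ?_⟩
        rcases hends with ⟨hst, -⟩ | ⟨hne', -, h2⟩
        · rw [hst] at hfcmem; simp at hfcmem
        · have hgl : st.getLast hne' = ((f, c) :: st₂).getLast (by simp) := by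
            have ha : st.getLast? = some (st.getLast hne') := List.getLast?_eq_getLast _
            have hb2 : st.getLast? = some (((f, c) :: st₂).getLast (by simp)) := by
              rw [hdecomp, List.getLast?_append_of_ne_nil _ (by simp)]
              exact List.getLast?_eq_getLast _
            rw [ha] at hb2
            exact Option.some.inj hb2
          rw [← hgl]
          exact h2
    · -- fresh edge: prepend
      refine ⟨(f, c) :: st, ?_, ?_, ?_, ?_⟩
      · intro s hs
        rcases List.mem_cons.1 hs with rfl | hs'
        · exact ⟨hf, hPf⟩
        · exact hstep s hs'
      · rcases hends with ⟨rfl, -⟩ | ⟨hne', h1, -⟩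
        · simp [List.Chain']
        · rcases st with _ | ⟨s1, rest⟩
          · exact absurd rfl hne'
          · simp only [List.head_cons] at h1
            refine List.isChain_cons_cons.2 ⟨?_, hch⟩
            rw [hhd, ← h1]
      · simp only [List.map_cons, List.nodup_cons]
        exact ⟨hfmem, hnd⟩
      · refine Or.inr ⟨by simp, by simpa using htl, ?_⟩
        rcases hends with ⟨rfl, hw⟩ | ⟨hne', -, h2⟩
        · simpa [← hw] using hhd
        · rw [List.getLast_cons hne']
          exact h2

end Beta

end Multigraph
namespace Multigraph

section Beta2

variable {G : Multigraph} [LinearOrder G.E]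

lemma beta_case2 (A : G.E → Bool) {P Q : G.PartialOrientation}
    (hP : G.CyclePathMinimal A P) (hindeg : ∀ w, G.indeg P w = G.indeg Q w)
    {e₀ : G.E} (hmin : ∀ f, P f ≠ Q f → e₀ ≤ f)
    (hPe : P e₀ = none) (hQe : Q e₀ = some (A e₀)) : False := by
  classical
  set v := G.dhead e₀ (A e₀) with hv
  have hcard : (Finset.univ.filter fun e => headOf P e = some v).card =
      (Finset.univ.filter fun e => headOf Q e = some v).card := by
    rw [← indeg_eq, ← indeg_eq, hindeg]
  have hnotsub : ¬ ((Finset.univ.filter fun e => headOf P e = some v) ⊆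
      (Finset.univ.filter fun e => headOf Q e = some v)) := by
    intro hsub
    have heq := Finset.eq_of_subset_of_card_le hsub (le_of_eq hcard.symm)
    have he₀Q : e₀ ∈ Finset.univ.filter fun e => headOf Q e = some v := by
      rw [Finset.mem_filter]
      exact ⟨Finset.mem_univ _, by rw [headOf, hQe]; rfl⟩
    rw [← heq] at he₀Q
    simp [headOf, hPe] at he₀Q
  obtain ⟨f, hfP, hfQ⟩ := Finset.not_subset.1 hnotsub
  simp only [Finset.mem_filter, Finset.mem_univ, true_and] at hfP hfQ
  obtain ⟨c, hPf, hdf⟩ : ∃ c, P f = some c ∧ G.dhead f c = v := by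
    rcases hPf' : P f with _ | c
    · rw [headOf, hPf'] at hfP; simp at hfP
    · rw [headOf, hPf'] at hfP
      exact ⟨c, rfl, by simpa using hfP⟩
  have hfD : P f ≠ Q f := by
    intro h
    rw [headOf, ← h, ← headOf] at hfQ
    exact hfQ hfP
  have hflt : e₀ < f := by
    refine lt_of_le_of_ne (hmin f hfD) ?_
    intro h
    rw [← h, hPe] at hPf
    exact nomatch hPf
  -- the violating half-open path
  set p : List (G.E × Bool) := [(f, c), (e₀, !(A e₀))] with hp
  have hhop : G.IsHalfOpenPath P p := by
    refine ⟨by simp [hp], ?_, ?_, ?_, ?_⟩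
    · simp only [hp, List.Chain', List.isChain_cons_cons, List.isChain_singleton, and_true]
      rw [dtail_not]
      exact hdf
    · simp [hp, (ne_of_gt hflt)]
    · intro s hs
      have hdp : p.dropLast = [(f, c)] := rfl
      rw [hdp] at hs
      simp only [List.mem_singleton] at hs
      rw [hs]
      exact hPf
    · intro h
      simp [hp, hPe]
  obtain ⟨s, hs, hsle, hsA⟩ := hP.2 p hhop
  simp only [hp, List.mem_cons, List.mem_singleton] at hs
  rcases hs with rfl | hs
  · have := hsle (e₀, !(A e₀)) (by simp [hp])
    simp at this
    exact absurd (le_antisymm this (le_of_lt hflt)) (ne_of_gt hflt)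
  · rcases hs with rfl | h
    · simp at hsA
    · exact List.not_mem_nil h

end Beta2

end Multigraph
namespace Multigraph

section Count

variable {G : Multigraph}

/-- Indicator that `T` orients `f` into the set `X`. -/
def chi (T : G.PartialOrientation) (X : Set G.V) (f : G.E) : ℤ :=
  if ∃ c, T f = some c ∧ G.dhead f c ∈ X then 1 else 0

lemma chi_eq_sum (T : G.PartialOrientation) (X : Set G.V) :
    ∑ f, chi T X f = ∑ w ∈ Finset.univ.filter (· ∈ X), (G.indeg T w : ℤ) := by
  classical
  have h1 : ∀ w, (G.indeg T w : ℤ) =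
      ∑ f, (if headOf T f = some w then (1 : ℤ) else 0) := by
    intro w
    rw [indeg_eq, Finset.sum_boole]
  rw [Finset.sum_congr rfl (fun w _ => h1 w), Finset.sum_comm]
  apply Finset.sum_congr rfl
  intro f _
  rcases hTf : T f with _ | c
  · have : chi T X f = 0 := by simp [chi, hTf]
    rw [this]
    apply (Finset.sum_eq_zero ?_).symm
    intro w _
    rw [headOf, hTf]
    simp
  · have hhead : headOf T f = some (G.dhead f c) := by rw [headOf, hTf]; rfl
    have : ∀ w, (if headOf T f = some w then (1:ℤ) else 0) =
        if w = G.dhead f c then 1 else 0 := by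
      intro w
      rw [hhead]
      by_cases h : w = G.dhead f c
      · simp [h]
      · rw [if_neg, if_neg h]
        simp only [Option.some.injEq]
        exact fun hh => h hh.symm
    rw [Finset.sum_congr rfl (fun w _ => this w), Finset.sum_ite_eq' _ (G.dhead f c) (fun _ => (1:ℤ))]
    by_cases hX : G.dhead f c ∈ X
    · rw [if_pos (by simpa using hX)]
      simp [chi, hTf, hX]
    · rw [if_neg (by simpa using hX)]
      simp [chi, hTf, hX]

lemma chi_global {P Q : G.PartialOrientation} (hindeg : ∀ w, G.indeg P w = G.indeg Q w)
    (X : Set G.V) : ∑ f, chi P X f = ∑ f, chi Q X f := by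
  rw [chi_eq_sum, chi_eq_sum]
  apply Finset.sum_congr rfl
  intro w _
  rw [hindeg]

end Count

end Multigraph
namespace Multigraph

section Beta1

variable {G : Multigraph} [LinearOrder G.E]

lemma beta_case1 (A : G.E → Bool) {P Q : G.PartialOrientation}
    (hP : G.CyclePathMinimal A P) (hindeg : ∀ w, G.indeg P w = G.indeg Q w)
    {e₀ : G.E} (hmin : ∀ f, P f ≠ Q f → e₀ ≤ f) (hne : P e₀ ≠ Q e₀)
    (hPe : P e₀ = some (!(A e₀))) : False := by
  classical
  set b : Bool := !(A e₀) with hb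
  set R : G.V → G.V → Prop :=
    fun x y => ∃ f c, e₀ < f ∧ P f = some c ∧ G.dtail f c = x ∧ G.dhead f c = y with hR
  set X : Set G.V := {x | Relation.ReflTransGen R (G.dhead e₀ b) x} with hX
  have hw₀ : G.dhead e₀ b ∈ X := Relation.ReflTransGen.refl
  have hclosed : ∀ {x y : G.V}, x ∈ X → R x y → y ∈ X :=
    fun hx hr => Relation.ReflTransGen.tail hx hr
  -- (i): the tail of e₀ is not in X
  have hv₁ : G.dtail e₀ b ∉ X := by
    intro hv
    obtain ⟨st, hstep, hch, hnd, hends⟩ := exists_good_steps P e₀ hv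
    have hcyc : G.IsDCycle P ((e₀, b) :: st) := by
      refine ⟨by simp, ?_, ?_, ?_⟩
      · intro s hs
        rcases List.mem_cons.1 hs with rfl | hs'
        · exact hPe
        · exact (hstep s hs').2
      · have htake : ((e₀, b) :: st).take 1 = [(e₀, b)] := rfl
        rw [htake]
        apply List.isChain_append.2
        refine ⟨?_, List.isChain_singleton _, ?_⟩
        · rcases hends with ⟨rfl, -⟩ | ⟨hne', h1, -⟩
          · exact List.isChain_singleton _
          · rcases st with _ | ⟨s1, rest⟩
            · exact absurd rfl hne'
            · exact List.isChain_cons_cons.2 ⟨by simpa using h1.symm, hch⟩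
        · intro x hx y hy
          simp only [List.head?_cons, Option.mem_def, Option.some.injEq] at hy
          rw [List.getLast?_eq_getLast (by simp), Option.mem_def, Option.some.injEq] at hx
          subst hx
          subst hy
          rcases hends with ⟨hst0, huv⟩ | ⟨hne', -, h2⟩
          · subst hst0
            simpa using huv
          · rw [List.getLast_cons hne']
            exact h2
      · simp only [List.map_cons, List.nodup_cons]
        refine ⟨?_, hnd⟩
        intro hmem
        obtain ⟨s, hs, hs1⟩ := List.mem_map.1 hmem
        exact absurd hs1 (ne_of_gt (hstep s hs).1)
    obtain ⟨s, hs, hsle, hsA⟩ := hP.1 _ hcyc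
    have hse : s = (e₀, b) := by
      rcases List.mem_cons.1 hs with rfl | hs'
      · rfl
      · have h1 := hsle (e₀, b) (by simp)
        exact absurd (lt_of_lt_of_le (hstep s hs').1 h1) (lt_irrefl _)
    rw [hse] at hsA
    simp only [hb] at hsA
    simp at hsA
  -- (ii): no large unoriented edge touches X
  have hnone : ∀ x, x ∈ X → ∀ g, e₀ < g → P g = none → G.fst g ≠ x ∧ G.snd g ≠ x := by
    intro x hx g hg hPg
    by_contra hcon
    rw [not_and_or, not_not, not_not] at hcon
    have hd : ∃ d, G.dtail g d = x := by
      rcases hcon with h | h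
      · exact ⟨true, by simpa [dtail] using h⟩
      · exact ⟨false, by simpa [dtail] using h⟩
    obtain ⟨d, hd⟩ := hd
    obtain ⟨st, hstep, hch, hnd, hends⟩ := exists_good_steps P e₀ hx
    have hgst : ∀ s ∈ st, s.1 ≠ g := by
      intro s hs h
      have := (hstep s hs).2
      rw [h, hPg] at this
      exact nomatch this
    have hhop : G.IsHalfOpenPath P ((e₀, b) :: (st ++ [(g, d)])) := by
      refine ⟨?_, ?_, ?_, ?_, ?_⟩
      · simp
      · rcases hends with ⟨rfl, huv⟩ | ⟨hne', h1, h2⟩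
        · simp only [List.nil_append]
          apply List.isChain_pair.2
          rw [hd, ← huv]
        · rcases st with _ | ⟨s1, rest⟩
          · exact absurd rfl hne'
          · simp only [List.head_cons] at h1
            refine List.isChain_cons_cons.2 ⟨h1.symm, ?_⟩
            show List.Chain' _ ((s1 :: rest) ++ [(g, d)])
            apply List.isChain_append.2
            refine ⟨hch, List.isChain_singleton _, ?_⟩
            intro u hu z hz
            simp only [List.head?_cons, Option.mem_def, Option.some.injEq] at hz
            rw [List.getLast?_eq_getLast (by simp), Option.mem_def, Option.some.injEq] at hu
            subst hu; subst hz
            rw [h2, hd]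
      · simp only [List.map_cons, List.map_append, List.nodup_cons]
        constructor
        · intro hmem
          rcases List.mem_append.1 hmem with hmem | hmem
          · obtain ⟨s, hs, hs1⟩ := List.mem_map.1 hmem
            exact absurd hs1 (ne_of_gt (hstep s hs).1)
          · have : e₀ = g := by simpa using hmem
            exact absurd this (ne_of_lt hg)
        · apply List.nodup_append.2
          refine ⟨hnd, by simp, ?_⟩
          intro a ha a' ha' haa
          have ha'' : a = g := haa.trans (by simpa using ha')
          obtain ⟨s, hs, hs1⟩ := List.mem_map.1 ha
          exact hgst s hs (hs1.trans ha'')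
      · intro s hs
        have hdl : ((e₀, b) :: (st ++ [(g, d)])).dropLast = (e₀, b) :: st := by
          rw [show (e₀, b) :: (st ++ [(g, d)]) = ((e₀, b) :: st) ++ [(g, d)] from rfl,
            List.dropLast_concat]
        rw [hdl] at hs
        rcases List.mem_cons.1 hs with rfl | hs'
        · exact hPe
        · exact (hstep s hs').2
      · intro h
        have hgl : ((e₀, b) :: (st ++ [(g, d)])).getLast h = (g, d) := by
          have h1 : ((e₀, b) :: (st ++ [(g, d)])).getLast? =
              some (((e₀, b) :: (st ++ [(g, d)])).getLast h) := List.getLast?_eq_getLast h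
          have h2 : (((e₀, b) :: st) ++ [(g, d)]).getLast? = some (g, d) :=
            List.getLast?_concat
          exact Option.some.inj (h1.symm.trans h2)
        rw [hgl]
        exact hPg
    obtain ⟨s, hs, hsle, hsA⟩ := hP.2 _ hhop
    have hse : s = (e₀, b) := by
      rcases List.mem_cons.1 hs with rfl | hs'
      · rfl
      · exfalso
        have h1 := hsle (e₀, b) (by simp)
        have h2 : e₀ < s.1 := by
          rcases List.mem_append.1 hs' with hmem | hmem
          · exact (hstep s hmem).1
          · simp only [List.mem_singleton] at hmem
            rw [hmem]
            exact hg
        exact absurd (lt_of_lt_of_le h2 h1) (lt_irrefl _)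
    rw [hse] at hsA
    simp only [hb] at hsA
    simp at hsA
  -- counting setup
  set D : Finset G.E := Finset.univ.filter (fun f => P f ≠ Q f) with hD
  have he₀D : e₀ ∈ D := by simp [hD]; exact hne
  set dX : G.E → ℤ :=
    fun f => (if G.fst f ∈ X then 1 else 0) + (if G.snd f ∈ X then 1 else 0) with hdX
  have hdXsplit : ∀ (f : G.E) (c : Bool), dX f =
      (if G.dhead f c ∈ X then 1 else 0) + (if G.dtail f c ∈ X then 1 else 0) := by
    intro f c
    cases c
    · rfl
    · simp only [hdX, dhead, dtail, if_true]
      exact add_comm _ _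
  have hdXnonneg : ∀ f, 0 ≤ dX f := by
    intro f
    simp only [hdX]
    split <;> split <;> omega
  set cc : G.PartialOrientation → G.E → ℤ := fun T f => 2 * chi T X f - dX f with hcc
  have hccsum : ∑ f, (cc P f - cc Q f) = 0 := by
    have hpt : ∀ f, cc P f - cc Q f = 2 * chi P X f - 2 * chi Q X f := by
      intro f
      simp only [hcc]
      ring
    rw [Finset.sum_congr rfl (fun f _ => hpt f), Finset.sum_sub_distrib,
      ← Finset.mul_sum, ← Finset.mul_sum, chi_global hindeg X]
    ring
  have hDsum : ∑ f ∈ D, (cc P f - cc Q f) = 0 := by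
    rw [← hccsum]
    apply Finset.sum_subset (Finset.subset_univ D)
    intro f _ hf
    have hPQ : P f = Q f := by
      simp only [hD, Finset.mem_filter, Finset.mem_univ, true_and, not_not] at hf
      exact hf
    simp [hcc, chi, hPQ]
  -- values at e₀
  have hccPe : cc P e₀ = 1 := by
    have h1 : chi P X e₀ = 1 := by
      rw [chi, if_pos]
      exact ⟨b, hPe, hw₀⟩
    have h2 : dX e₀ = 1 := by
      rw [hdXsplit e₀ b, if_pos hw₀, if_neg hv₁]
      norm_num
    simp only [hcc]
    rw [h1, h2]
    norm_num
  have hccQe : cc Q e₀ = -1 := by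
    have h2 : dX e₀ = 1 := by
      rw [hdXsplit e₀ b, if_pos hw₀, if_neg hv₁]
      norm_num
    have h1 : chi Q X e₀ = 0 := by
      rw [chi, if_neg]
      rintro ⟨c, hQc, hcX⟩
      have hcb : c ≠ b := by
        intro h
        apply hne
        rw [hPe, hQc, h, hb]
      have hcA : c = !b := by
        cases c <;> cases hbv : b <;> simp_all
      rw [hcA, dhead_not] at hcX
      exact hv₁ hcX
    simp only [hcc]
    rw [h1, h2]
    norm_num
  -- nonnegativity for P on D\{e₀}
  have hCP : ∀ f ∈ D, f ≠ e₀ → 0 ≤ cc P f := by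
    intro f hfD hfne
    have hfPQ : P f ≠ Q f := by
      simp only [hD, Finset.mem_filter, Finset.mem_univ, true_and] at hfD
      exact hfD
    have hflt : e₀ < f := lt_of_le_of_ne (hmin f hfPQ) (Ne.symm hfne)
    rcases hPf : P f with _ | c
    · have h1 : G.fst f ∉ X := fun hx => (hnone _ hx f hflt hPf).1 rfl
      have h2 : G.snd f ∉ X := fun hx => (hnone _ hx f hflt hPf).2 rfl
      have : chi P X f = 0 := by simp [chi, hPf]
      simp [hcc, this, hdX, h1, h2]
    · have hsplit := hdXsplit f c
      by_cases htX : G.dtail f c ∈ X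
      · have hhX : G.dhead f c ∈ X := hclosed htX ⟨f, c, hflt, hPf, rfl, rfl⟩
        have h1 : chi P X f = 1 := by
          rw [chi, if_pos]
          exact ⟨c, hPf, hhX⟩
        simp only [hcc]
        simp only [h1, hsplit, if_pos htX, if_pos hhX]
        omega
      · simp only [hcc]
        have h0 : chi P X f = if G.dhead f c ∈ X then 1 else 0 := by
          by_cases hhX : G.dhead f c ∈ X
          · rw [chi, if_pos ⟨c, hPf, hhX⟩, if_pos hhX]
          · rw [chi, if_neg, if_neg hhX]
            rintro ⟨c', hc', hX'⟩
            rw [hPf] at hc'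
            rw [Option.some.inj hc'] at hhX
            exact hhX hX'
        simp only [h0, hsplit, if_neg htX]
        split <;> omega
  -- extract the violating edge f₀
  have hex : ∃ f₀ ∈ D, f₀ ≠ e₀ ∧ cc P f₀ - cc Q f₀ < 0 := by
    by_contra hno
    push_neg at hno
    have hpos : ∀ f ∈ D.erase e₀, 0 ≤ cc P f - cc Q f := by
      intro f hf
      exact hno f (Finset.mem_of_mem_erase hf) (Finset.ne_of_mem_erase hf)
    have hsum2 : (0:ℤ) < ∑ f ∈ D, (cc P f - cc Q f) := by
      rw [← Finset.add_sum_erase _ _ he₀D]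
      have h2 : cc P e₀ - cc Q e₀ = 2 := by rw [hccPe, hccQe]; ring
      have h3 : (0:ℤ) ≤ ∑ f ∈ D.erase e₀, (cc P f - cc Q f) := Finset.sum_nonneg hpos
      omega
    rw [hDsum] at hsum2
    exact lt_irrefl _ hsum2
  obtain ⟨f₀, hf₀D, hf₀ne, hflt0⟩ := hex
  have hfPQ : P f₀ ≠ Q f₀ := by
    simp only [hD, Finset.mem_filter, Finset.mem_univ, true_and] at hf₀D
    exact hf₀D
  have hf₀gt : e₀ < f₀ := lt_of_le_of_ne (hmin f₀ hfPQ) (Ne.symm hf₀ne)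
  have hPge : 0 ≤ cc P f₀ := hCP f₀ hf₀D hf₀ne
  have hQge : 1 ≤ cc Q f₀ := by omega
  rcases hQf : Q f₀ with _ | c₀
  · have h1 : chi Q X f₀ = 0 := by simp [chi, hQf]
    simp only [hcc] at hQge
    simp only [h1] at hQge
    have := hdXnonneg f₀
    omega
  · have hsplit := hdXsplit f₀ c₀
    have hchiQle : chi Q X f₀ ≤ 1 := by
      rw [chi]; split <;> omega
    have hhX : G.dhead f₀ c₀ ∈ X := by
      by_contra h
      have h1 : chi Q X f₀ = 0 := by
        rw [chi, if_neg]
        rintro ⟨c', hc', hX'⟩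
        rw [hQf] at hc'
        rw [Option.some.inj hc'] at h
        exact h hX'
      simp only [hcc] at hQge
      simp only [h1] at hQge
      have := hdXnonneg f₀
      omega
    have htX : G.dtail f₀ c₀ ∉ X := by
      intro h
      simp only [hcc] at hQge
      rw [hsplit, if_pos hhX, if_pos h] at hQge
      omega
    rcases hPf : P f₀ with _ | c
    · have h1 := hnone _ hhX f₀ hf₀gt hPf
      cases c₀ <;> simp [dhead] at h1
    · have hcases : c = c₀ ∨ c = !c₀ := by cases c <;> cases c₀ <;> simp
      rcases hcases with rfl | rfl
      · exact hfPQ (by rw [hPf, hQf])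
      · apply htX
        apply hclosed hhX
        exact ⟨f₀, !c₀, hf₀gt, hPf, by rw [dtail_not], by rw [dhead_not]⟩

end Beta1

end Multigraph
namespace Multigraph

section BetaMain

variable {G : Multigraph} [LinearOrder G.E]

/-- Two cycle-path minimal partial orientations with the same indegree sequence coincide. -/
lemma beta (A : G.E → Bool) {O O' : G.PartialOrientation}
    (h1 : G.CyclePathMinimal A O) (h2 : G.CyclePathMinimal A O')
    (hdeg : ∀ v, G.indeg O v = G.indeg O' v) : O = O' := by
  classical
  by_contra hne
  have hDne : (Finset.univ.filter (fun e => O e ≠ O' e)).Nonempty := by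
    by_contra h
    rw [Finset.not_nonempty_iff_eq_empty, Finset.filter_eq_empty_iff] at h
    apply hne
    funext e
    have := h (Finset.mem_univ e)
    simpa using this
  set e₀ := (Finset.univ.filter (fun e => O e ≠ O' e)).min' hDne with he₀
  have hmem := (Finset.univ.filter (fun e => O e ≠ O' e)).min'_mem hDne
  rw [Finset.mem_filter] at hmem
  have hne₀ : O e₀ ≠ O' e₀ := hmem.2
  have hminO : ∀ f, O f ≠ O' f → e₀ ≤ f := by
    intro f hf
    apply Finset.min'_le
    simp [hf]
  have hminO' : ∀ f, O' f ≠ O f → e₀ ≤ f := fun f hf => hminO f (Ne.symm hf)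
  have hdeg' : ∀ v, G.indeg O' v = G.indeg O v := fun v => (hdeg v).symm
  have htri : ∀ x : Option Bool, x = none ∨ x = some (A e₀) ∨ x = some (!(A e₀)) := by
    intro x
    rcases x with _ | c
    · exact Or.inl rfl
    · by_cases h : c = A e₀
      · exact Or.inr (Or.inl (by rw [h]))
      · refine Or.inr (Or.inr ?_)
        cases c <;> cases hA : A e₀ <;> simp_all
  rcases htri (O e₀) with hO | hO | hO
  · rcases htri (O' e₀) with hO' | hO' | hO'
    · exact hne₀ (by rw [hO, hO'])
    · exact beta_case2 A h1 hdeg hminO hO hO'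
    · exact beta_case1 A h2 hdeg' hminO' (Ne.symm hne₀) hO'
  · rcases htri (O' e₀) with hO' | hO' | hO'
    · exact beta_case2 A h2 hdeg' hminO' hO' hO
    · exact hne₀ (by rw [hO, hO'])
    · exact beta_case1 A h2 hdeg' hminO' (Ne.symm hne₀) hO'
  · exact beta_case1 A h1 hdeg hminO hne₀ hO

end BetaMain

end Multigraph
/-- every partial orientation is equivalent via cycle reversals and edge
pivots to a unique cycle-path minimal partial orientation; consequently cycle-path
minimal partial orientations are unique representatives of their indegree sequences. -/
theorem stmt15 (G : Multigraph) [LinearOrder G.E] (A : G.E → Bool) (hG : G.Connected) :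
    (∀ O : G.PartialOrientation,
      ∃! O', Relation.ReflTransGen (fun a b => G.cycleRev a b ∨ G.pivot a b) O O' ∧
        G.CyclePathMinimal A O') ∧
    (∀ O O' : G.PartialOrientation, G.CyclePathMinimal A O → G.CyclePathMinimal A O' →
      (∀ v, G.indeg O v = G.indeg O' v) → O = O') := by
  constructor
  · intro O
    obtain ⟨O', hR, hC⟩ := Multigraph.exists_cpm A O
    refine ⟨O', ⟨hR, hC⟩, ?_⟩
    rintro O'' ⟨hR'', hC''⟩
    apply Multigraph.beta A hC'' hC
    intro v
    rw [Multigraph.indeg_rtg hR'' v, Multigraph.indeg_rtg hR v]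
  · intro O O' h1 h2 hdeg
    exact Multigraph.beta A h1 h2 hdeg
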